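/- arXiv:1009.3764 — 6 statements merged into one kernel-verified Lean document; each statement's English description precedes it below -/
import Mathlib

section
/- Let f_1,...,f_r be polynomials over F_q in n variables with total degrees d_1,...,d_r and d = d_1 + ... + d_r. If n > d and the f_i are all homogeneous, then the system f_1 = ... = f_r = 0 has a nonzero common solution in F_q^n. -/
theorem chevalley_nontrivial_zero
    (F : Type*) [Field F] [Fintype F]
    (n r : ℕ) (f : Fin r → MvPolynomial (Fin n) F) (d : Fin r → ℕ)
    (hdeg : ∀ i, (f i).IsHomogeneous (d i))
    (hd1 : ∀ i, 1 ≤ d i)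
    (hn : ∑ i, d i < n) :
    ∃ x : Fin n → F, x ≠ 0 ∧ ∀ i, MvPolynomial.eval x (f i) = 0 := by
  classical
  obtain ⟨p, hp⟩ := CharP.exists F
  haveI := hp
  haveI : Fact p.Prime := ⟨CharP.char_is_prime F p⟩
  have hzero : ∀ i, MvPolynomial.eval (0 : Fin n → F) (f i) = 0 := by
    intro i
    rw [MvPolynomial.eval_zero]
    exact (hdeg i).coeff_eq_zero (by have := hd1 i; simp; omega)
  have hlt : (∑ i, (f i).totalDegree) < Fintype.card (Fin n) := by
    calc ∑ i, (f i).totalDegree ≤ ∑ i, d i :=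
          Finset.sum_le_sum fun i _ => (hdeg i).totalDegree_le
      _ < Fintype.card (Fin n) := by simpa using hn
  have h1 := char_dvd_card_solutions_of_fintype_sum_lt (K := F) (f := f) p hlt
  have h1' : p ∣ Nat.card { x : Fin n → F // ∀ i, MvPolynomial.eval x (f i) = 0 } := by
    rw [Nat.card_eq_fintype_card]; convert h1 using 2
  have hpos : 0 < Nat.card { x : Fin n → F // ∀ i, MvPolynomial.eval x (f i) = 0 } :=
    Nat.card_pos_iff.mpr ⟨⟨⟨0, hzero⟩⟩, Finite.of_fintype _⟩
  have h2 : 1 < Nat.card { x : Fin n → F // ∀ i, MvPolynomial.eval x (f i) = 0 } :=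
    lt_of_lt_of_le (Fact.out : p.Prime).one_lt (Nat.le_of_dvd hpos h1')
  haveI := Finite.one_lt_card_iff_nontrivial.mp h2
  obtain ⟨⟨x, hx⟩, ⟨y, hy⟩, hxy⟩ := exists_pair_ne
    { x : Fin n → F // ∀ i, MvPolynomial.eval x (f i) = 0 }
  by_cases hx0 : x = 0
  · exact ⟨y, fun h => hxy (by simp [Subtype.ext_iff, hx0, h]), hy⟩
  · exact ⟨x, hx0, hx⟩
end

section
/- Let Z ⊆ F_q^n be any set, let L_0 ⊆ F_q^n be an affine subspace, let L ⊇ L_0 be an affine subspace of maximal dimension k with #(Z ∩ L) = #(Z ∩ L_0), and let L' ⊃ L be a (k+1)-dimensional affine subspace minimizing #(Z ∩ L'). Then #Z ≥ #(Z ∩ L) + ((q^{n-k} − 1)/(q − 1))·(#(Z ∩ L') − #(Z ∩ L)). -/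
open Module Set

private lemma ncard_coe_affine' {F V : Type*} [Field F] [Fintype F] [AddCommGroup V]
    [Module F V] [Fintype V] (M : AffineSubspace F V) (h : (M : Set V).Nonempty) :
    (M : Set V).ncard = Fintype.card F ^ finrank F M.direction := by
  classical
  obtain ⟨p, hp⟩ := h
  have himg : (M : Set V) = (fun v : V => v + p) '' (M.direction : Set V) := by
    ext x
    constructor
    · intro hx
      exact ⟨x - p, AffineSubspace.vsub_mem_direction hx hp, by simp⟩
    · rintro ⟨v, hv, rfl⟩
      exact (AffineSubspace.vadd_mem_iff_mem_direction v hp).2 hv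
  rw [himg, Set.ncard_image_of_injective _ (add_left_injective p)]
  rw [← Nat.card_coe_set_eq]
  simp only [SetLike.coe_sort_coe]
  rw [Nat.card_eq_fintype_card]
  exact card_eq_pow_finrank (K := F) (V := M.direction)

private lemma ncard_biUnion' {α ι : Type*} [Fintype α] (s : Finset ι) (f : ι → Set α)
    (h : ∀ i ∈ s, ∀ j ∈ s, i ≠ j → Disjoint (f i) (f j)) :
    (⋃ i ∈ s, f i).ncard = ∑ i ∈ s, (f i).ncard := by
  classical
  induction s using Finset.induction_on with
  | empty => simp
  | insert a t hx ih =>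
    rw [Finset.set_biUnion_insert, Finset.sum_insert hx,
      Set.ncard_union_eq ?_ (Set.toFinite _) (Set.toFinite _),
      ih (fun i hi j hj hij => h i (Finset.mem_insert_of_mem hi) j (Finset.mem_insert_of_mem hj) hij)]
    exact Set.disjoint_iUnion₂_right.2 fun i hi =>
      h a (Finset.mem_insert_self a t) i (Finset.mem_insert_of_mem hi) (fun e => hx (e ▸ hi))

theorem count_lower_bound_from_flags
    (F : Type*) [Field F] [Fintype F]
    (n k : ℕ) (Z : Set (Fin n → F))
    (L₀ L L' : AffineSubspace F (Fin n → F))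
    (hL₀ : (L₀ : Set (Fin n → F)).Nonempty)
    (hL₀L : L₀ ≤ L)
    (hk : Module.finrank F L.direction = k)
    (hsame : (Z ∩ L).ncard = (Z ∩ L₀).ncard)
    -- `L` has maximal dimension among subspaces containing `L₀` with the same count:
    (hmax : ∀ M : AffineSubspace F (Fin n → F), L₀ ≤ M →
      (Z ∩ M).ncard = (Z ∩ L₀).ncard → Module.finrank F M.direction ≤ k)
    (hLL' : L < L')
    (hk' : Module.finrank F L'.direction = k + 1)
    -- `L'` minimizes the count among `(k+1)`-dimensional subspaces containing `L`:
    (hmin : ∀ M : AffineSubspace F (Fin n → F), L < M →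
      Module.finrank F M.direction = k + 1 → (Z ∩ L').ncard ≤ (Z ∩ M).ncard) :
    Z.ncard ≥ (Z ∩ L).ncard +
      ((Fintype.card F ^ (n - k) - 1) / (Fintype.card F - 1)) *
        ((Z ∩ L').ncard - (Z ∩ L).ncard) := by
  classical
  set q := Fintype.card F with hqdef
  have hq2 : 2 ≤ q := Fintype.one_lt_card
  -- L is nonempty
  obtain ⟨p₀, hp₀⟩ := hL₀
  have hp : p₀ ∈ L := hL₀L hp₀
  have hLne : (L : Set (Fin n → F)).Nonempty := ⟨p₀, hp⟩
  -- k < n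
  have hkn : k + 1 ≤ n := by
    have := Submodule.finrank_le L'.direction
    rwa [hk', Module.finrank_fin_fun] at this
  -- strict count increase
  have hcc' : (Z ∩ L).ncard < (Z ∩ L').ncard := by
    rcases lt_or_ge ((Z ∩ L).ncard) ((Z ∩ L').ncard) with h | h
    · exact h
    · exfalso
      have hle : (Z ∩ (L : Set (Fin n → F))).ncard ≤ (Z ∩ L').ncard :=
        Set.ncard_le_ncard (Set.inter_subset_inter_right _ hLL'.le) (Set.toFinite _)
      have heq : (Z ∩ (L' : Set (Fin n → F))).ncard = (Z ∩ L₀).ncard := by omega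
      have := hmax L' (le_trans hL₀L hLL'.le) heq
      omega
  set c := (Z ∩ (L : Set (Fin n → F))).ncard with hc
  set c' := (Z ∩ (L' : Set (Fin n → F))).ncard with hc'
  -- the span of L and an outside point
  have hspan : ∀ x : Fin n → F, x ∉ L →
      L < affineSpan F (insert x (L : Set (Fin n → F))) ∧
      finrank F (affineSpan F (insert x (L : Set (Fin n → F)))).direction = k + 1 := by
    intro x hx
    set Mx := affineSpan F (insert x (L : Set (Fin n → F))) with hMx
    have hxMx : x ∈ Mx := mem_affineSpan F (Set.mem_insert _ _)
    have hLMx : L ≤ Mx := by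
      conv_lhs => rw [← AffineSubspace.affineSpan_coe L]
      exact affineSpan_mono F (Set.subset_insert _ _)
    have hlt : L < Mx := lt_of_le_of_ne hLMx (fun e => hx (e ▸ hxMx))
    refine ⟨hlt, le_antisymm ?_ ?_⟩
    · have hdir : Mx.direction = Submodule.span F {x -ᵥ p₀} ⊔ L.direction :=
        AffineSubspace.direction_affineSpan_insert hp
      have h1 : finrank F (Submodule.span F {x -ᵥ p₀}) = 1 := by
        apply finrank_span_singleton
        simp only [vsub_eq_sub, sub_ne_zero]
        exact fun e => hx (e ▸ hp)
      calc finrank F Mx.direction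
          ≤ finrank F (Submodule.span F {x -ᵥ p₀}) + finrank F L.direction := by
            rw [hdir]; exact Submodule.finrank_add_le_finrank_add_finrank _ _
        _ = k + 1 := by rw [h1, hk]; omega
    · have : L.direction < Mx.direction := AffineSubspace.direction_lt_of_nonempty hlt hLne
      have := Submodule.finrank_lt_finrank_of_lt this
      omega
  -- uniqueness of the (k+1)-dim subspace through a point outside L
  have huniq : ∀ (M : AffineSubspace F (Fin n → F)), L < M →
      finrank F M.direction = k + 1 → ∀ x, x ∈ M → x ∉ L →
      M = affineSpan F (insert x (L : Set (Fin n → F))) := by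
    intro M hLM hM x hxM hxL
    set Mx := affineSpan F (insert x (L : Set (Fin n → F))) with hMxdef
    obtain ⟨hlt, hfr⟩ := hspan x hxL
    rw [← hMxdef] at hlt hfr
    have hMxM : Mx ≤ M := by
      apply affineSpan_le.2
      exact Set.insert_subset hxM hLM.le
    have hdir : Mx.direction = M.direction :=
      Submodule.eq_of_le_of_finrank_le (AffineSubspace.direction_le hMxM) (by omega)
    exact ((AffineSubspace.eq_iff_direction_eq_of_mem hxM
      (mem_affineSpan F (Set.mem_insert _ _))).2 hdir.symm)
  -- the finset of (k+1)-dimensional subspaces containing L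
  haveI : Fintype (AffineSubspace F (Fin n → F)) :=
    Fintype.ofInjective (fun M => (M : Set (Fin n → F))) SetLike.coe_injective
  set S : Finset (AffineSubspace F (Fin n → F)) :=
    Finset.univ.filter (fun M => L < M ∧ finrank F M.direction = k + 1) with hSdef
  have hmemS : ∀ M, M ∈ S ↔ L < M ∧ finrank F M.direction = k + 1 := by
    intro M; simp [hSdef]
  -- disjointness of the punctured pieces
  have hdisj : ∀ M₁ ∈ S, ∀ M₂ ∈ S, M₁ ≠ M₂ →
      Disjoint ((M₁ : Set (Fin n → F)) \ L) ((M₂ : Set (Fin n → F)) \ L) := by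
    intro M₁ h₁ M₂ h₂ hne
    rw [Set.disjoint_left]
    rintro x ⟨hx1, hxL⟩ ⟨hx2, -⟩
    obtain ⟨hl1, hd1⟩ := (hmemS M₁).1 h₁
    obtain ⟨hl2, hd2⟩ := (hmemS M₂).1 h₂
    exact hne ((huniq M₁ hl1 hd1 x hx1 hxL).trans (huniq M₂ hl2 hd2 x hx2 hxL).symm)
  -- cardinalities of pieces
  have hcardL : (L : Set (Fin n → F)).ncard = q ^ k := by
    rw [ncard_coe_affine' L hLne, hk]
  have hcardM : ∀ M ∈ S, ((M : Set (Fin n → F)) \ L).ncard = q ^ (k + 1) - q ^ k := by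
    intro M hM
    obtain ⟨hl, hd⟩ := (hmemS M).1 hM
    have hsub : (L : Set (Fin n → F)) ⊆ M := hl.le
    rw [Set.ncard_diff hsub (Set.toFinite _), hcardL,
      ncard_coe_affine' M ⟨p₀, hsub hp⟩, hd]
  -- the partition of the full space
  have hpart : (Set.univ : Set (Fin n → F)) =
      (L : Set (Fin n → F)) ∪ ⋃ M ∈ S, ((M : Set (Fin n → F)) \ L) := by
    apply Set.eq_of_subset_of_subset
    · intro x _
      by_cases hxL : x ∈ L
      · exact Or.inl hxL
      · right
        obtain ⟨hlt, hfr⟩ := hspan x hxL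
        refine Set.mem_biUnion ((hmemS _).2 ⟨hlt, hfr⟩)
          ⟨mem_affineSpan F (Set.mem_insert _ _), hxL⟩
    · exact fun x _ => Set.mem_univ x
  have hdisjL : Disjoint (L : Set (Fin n → F)) (⋃ M ∈ S, ((M : Set (Fin n → F)) \ L)) := by
    rw [Set.disjoint_left]
    intro x hxL hxU
    obtain ⟨M, hM, hxM, hxL'⟩ := by simpa using hxU
    exact hxL' hxL
  -- the counting identity
  have hcount : q ^ n = q ^ k + S.card * (q ^ (k + 1) - q ^ k) := by
    have h1 : (Set.univ : Set (Fin n → F)).ncard = q ^ n := by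
      rw [Set.ncard_univ, Nat.card_eq_fintype_card]
      simp [hqdef]
    rw [hpart, Set.ncard_union_eq hdisjL (Set.toFinite _) (Set.toFinite _),
      ncard_biUnion' S _ hdisj, hcardL] at h1
    rw [Finset.sum_congr rfl hcardM, Finset.sum_const, smul_eq_mul] at h1
    omega
  -- S.card equals the quotient in the statement
  have hScard : S.card = (q ^ (n - k) - 1) / (q - 1) := by
    have hqk : 0 < q ^ k := Nat.pow_pos (by omega)
    have hmul : S.card * (q - 1) * q ^ k = (q ^ (n - k) - 1) * q ^ k := by
      have e1 : S.card * ((q - 1) * q ^ k) = q ^ n - q ^ k := by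
        have : (q - 1) * q ^ k = q ^ (k + 1) - q ^ k := by
          rw [Nat.sub_mul, one_mul, pow_succ, mul_comm (q ^ k) q]
        rw [this]
        omega
      have e2 : (q ^ (n - k) - 1) * q ^ k = q ^ n - q ^ k := by
        rw [Nat.sub_mul, one_mul, ← pow_add]
        congr 2
        omega
      rw [mul_assoc, e1, e2]
    have hcancel : S.card * (q - 1) = q ^ (n - k) - 1 :=
      Nat.eq_of_mul_eq_mul_right hqk hmul
    symm
    exact Nat.div_eq_of_eq_mul_left (by omega) hcancel.symm
  -- each piece of Z has at least c' - c points
  have hZpiece : ∀ M ∈ S, c' - c ≤ (Z ∩ ((M : Set (Fin n → F)) \ L)).ncard := by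
    intro M hM
    obtain ⟨hl, hd⟩ := (hmemS M).1 hM
    have hsplit : Z ∩ (M : Set (Fin n → F)) =
        (Z ∩ L) ∪ (Z ∩ ((M : Set (Fin n → F)) \ L)) := by
      rw [← Set.inter_union_distrib_left]
      congr 1
      rw [Set.union_diff_cancel hl.le]
    have hdisj2 : Disjoint (Z ∩ (L : Set (Fin n → F)))
        (Z ∩ ((M : Set (Fin n → F)) \ L)) := by
      rw [Set.disjoint_left]
      rintro x ⟨-, hxL⟩ ⟨-, -, hxL'⟩
      exact hxL' hxL
    have := hmin M hl hd
    rw [hsplit, Set.ncard_union_eq hdisj2 (Set.toFinite _) (Set.toFinite _)] at this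
    omega
  -- lower bound for Z
  have hZge : c + S.card * (c' - c) ≤ Z.ncard := by
    have hsub : (Z ∩ (L : Set (Fin n → F))) ∪
        (⋃ M ∈ S, Z ∩ ((M : Set (Fin n → F)) \ L)) ⊆ Z := by
      apply Set.union_subset Set.inter_subset_left
      exact Set.iUnion₂_subset fun M hM => Set.inter_subset_left
    have hdisj3 : Disjoint (Z ∩ (L : Set (Fin n → F)))
        (⋃ M ∈ S, Z ∩ ((M : Set (Fin n → F)) \ L)) := by
      rw [Set.disjoint_left]
      rintro x ⟨-, hxL⟩ hxU
      obtain ⟨M, hM, -, -, hxL'⟩ := by simpa using hxU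
      exact hxL' hxL
    have hdisj4 : ∀ M₁ ∈ S, ∀ M₂ ∈ S, M₁ ≠ M₂ →
        Disjoint (Z ∩ ((M₁ : Set (Fin n → F)) \ L)) (Z ∩ ((M₂ : Set (Fin n → F)) \ L)) :=
      fun M₁ h₁ M₂ h₂ hne => ((hdisj M₁ h₁ M₂ h₂ hne).mono
        Set.inter_subset_right Set.inter_subset_right)
    calc c + S.card * (c' - c)
        = c + ∑ M ∈ S, (c' - c) := by rw [Finset.sum_const, smul_eq_mul]
      _ ≤ c + ∑ M ∈ S, (Z ∩ ((M : Set (Fin n → F)) \ L)).ncard := by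
          gcongr with M hM
          exact hZpiece M hM
      _ = ((Z ∩ (L : Set (Fin n → F))) ∪
            (⋃ M ∈ S, Z ∩ ((M : Set (Fin n → F)) \ L))).ncard := by
          rw [Set.ncard_union_eq hdisj3 (Set.toFinite _) (Set.toFinite _),
            ncard_biUnion' S _ hdisj4]
      _ ≤ Z.ncard := Set.ncard_le_ncard hsub (Set.toFinite _)
  rw [← hScard]
  omega
end

section
/- Let q = 2 and let S ⊆ F_2^t contain t+1 points in general position (i.e., affinely spanning F_2^t). If no affine 2-plane in F_2^t meets S in exactly 3 points, then S = F_2^t. -/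
theorem lemma2_i
    (F : Type*) [Field F] [Fintype F] (hq : Fintype.card F = 2)
    (t : ℕ) (S : Set (Fin t → F))
    (P : Fin (t + 1) → Fin t → F)
    (hPS : ∀ i, P i ∈ S)
    (hspan : affineSpan F (Set.range P) = ⊤)
    (hplane : ¬ ∃ L : AffineSubspace F (Fin t → F),
      Module.finrank F L.direction = 2 ∧ (S ∩ L).ncard = 3) :
    S = Set.univ := by
  classical
  have h2 : (2 : F) = 0 := by
    have h := FiniteField.cast_card_eq_zero F
    rw [hq] at h
    exact_mod_cast h
  have hF : ∀ a : F, a = 0 ∨ a = 1 := by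
    intro a
    by_cases h : a = 0
    · exact Or.inl h
    · right
      have := FiniteField.pow_card_sub_one_eq_one a h
      rwa [hq, pow_one] at this
  have h2v : ∀ v : Fin t → F, v + v = 0 := by
    intro v
    rw [← two_smul F v, h2, zero_smul]
  have hneg : ∀ v : Fin t → F, -v = v := fun v => neg_eq_of_add_eq_zero_left (h2v v)
  -- closure of S under y + z - x
  have hclos : ∀ x ∈ S, ∀ y ∈ S, ∀ z ∈ S, y + z - x ∈ S := by
    intro x hx y hy z hz
    by_cases hxy : y = x
    · subst hxy
      simpa using hz
    by_cases hxz : z = x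
    · subst hxz
      simpa using hy
    by_cases hyz : y = z
    · subst hyz
      have : y + y - x = x := by rw [h2v y, zero_sub, hneg]
      rwa [this]
    by_contra hw
    apply hplane
    refine ⟨AffineSubspace.mk' x (Submodule.span F {y - x, z - x}), ?_, ?_⟩
    · rw [AffineSubspace.direction_mk']
      have hli : LinearIndependent F ![y - x, z - x] := by
        rw [LinearIndependent.pair_iff]
        intro a b hab
        rcases hF a with ha | ha <;> rcases hF b with hb | hb <;> subst ha <;> subst hb
        · exact ⟨rfl, rfl⟩
        · exfalso
          rw [zero_smul, one_smul, zero_add, sub_eq_zero] at hab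
          exact hxz hab
        · exfalso
          rw [zero_smul, one_smul, add_zero, sub_eq_zero] at hab
          exact hxy hab
        · exfalso
          rw [one_smul, one_smul] at hab
          have hyz' : y + z = x + x := by
            have : y - x + (z - x) + (x + x) = y + z := by abel
            rw [← this, hab, zero_add]
          rw [h2v x] at hyz'
          have : y = -z := eq_neg_of_add_eq_zero_left hyz'
          rw [hneg] at this
          exact hyz this
      have := finrank_span_eq_card hli
      rw [show Set.range ![y - x, z - x] = {y - x, z - x} by
        simp [Matrix.range_cons, Matrix.range_empty, Set.pair_comm]] at this
      rw [this]
      simp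
    · have hset : S ∩ ↑(AffineSubspace.mk' x (Submodule.span F {y - x, z - x}))
          = {x, y, z} := by
        ext p
        constructor
        · rintro ⟨hpS, hpL⟩
          have hp : p -ᵥ x ∈ Submodule.span F {y - x, z - x} :=
            AffineSubspace.mem_mk'.mp hpL
          rw [Submodule.mem_span_pair] at hp
          obtain ⟨a, b, hab⟩ := hp
          have hvsub : p -ᵥ x = p - x := rfl
          rw [hvsub] at hab
          rcases hF a with ha | ha <;> rcases hF b with hb | hb <;> subst ha <;> subst hb
          · left
            rw [zero_smul, zero_smul, add_zero] at hab
            exact sub_eq_zero.mp hab.symm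
          · right; right
            rw [zero_smul, one_smul, zero_add] at hab
            exact (sub_left_injective hab).symm
          · right; left
            rw [zero_smul, one_smul, add_zero] at hab
            exact (sub_left_injective hab).symm
          · exfalso
            rw [one_smul, one_smul] at hab
            have hpw : p = y + z - x := by
              have : y - x + (z - x) + x = y + z - x := by abel
              rw [← this, hab]
              abel
            rw [hpw] at hpS
            exact hw hpS
        · intro hp
          rcases hp with hp | hp | hp <;> subst hp
          · refine ⟨hx, AffineSubspace.mem_mk'.mpr ?_⟩
            simp
          · refine ⟨hy, AffineSubspace.mem_mk'.mpr ?_⟩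
            exact Submodule.subset_span (Set.mem_insert _ _)
          · refine ⟨hz, AffineSubspace.mem_mk'.mpr ?_⟩
            exact Submodule.subset_span (Set.mem_insert_of_mem _ rfl)
      rw [hset]
      rw [Set.ncard_insert_of_notMem (by simp [Ne.symm hxy, Ne.symm hxz]),
        Set.ncard_pair hyz]
  -- S is an affine subspace
  let T : AffineSubspace F (Fin t → F) :=
    { carrier := S
      smul_vsub_vadd_mem' := by
        intro c p1 p2 p3 h1 h2' h3
        rcases hF c with hc | hc <;> subst hc
        · simpa using h3
        · have heq : (1 : F) • (p1 -ᵥ p2) +ᵥ p3 = p1 + p3 - p2 := by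
            show (1 : F) • (p1 - p2) + p3 = p1 + p3 - p2
            rw [one_smul]; abel
          rw [heq]
          exact hclos p2 h2' p1 h1 p3 h3 }
  have hle : affineSpan F (Set.range P) ≤ T := by
    rw [affineSpan_le]
    rintro p ⟨i, rfl⟩
    exact hPS i
  rw [hspan] at hle
  ext p
  simp only [Set.mem_univ, iff_true]
  exact hle (AffineSubspace.mem_top F _ p)
end

section
/- Let q ≥ 3 and let S ⊆ F_q^t contain t+1 points in general position. If every affine line meeting S in at least two points is entirely contained in S, then S = F_q^t. -/
theorem lemma2_ii
    (F : Type*) [Field F] [Fintype F] (hq : 3 ≤ Fintype.card F)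
    (t : ℕ) (S : Set (Fin t → F))
    (P : Fin (t + 1) → Fin t → F)
    (hPS : ∀ i, P i ∈ S)
    (hspan : affineSpan F (Set.range P) = ⊤)
    (hline : ∀ ℓ : AffineSubspace F (Fin t → F),
      Module.finrank F ℓ.direction = 1 → 2 ≤ (S ∩ ℓ).ncard →
      (ℓ : Set (Fin t → F)) ⊆ S) :
    S = Set.univ := by
  classical
  -- Step 1: line closure
  have lm : ∀ x ∈ S, ∀ y ∈ S, ∀ a : F, a • x + (1 - a) • y ∈ S := by
    intro x hx y hy a
    by_cases hxy : x = y
    · subst hxy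
      have : a • x + (1 - a) • x = x := by
        rw [← add_smul]; ring_nf; exact one_smul F x
      rwa [this]
    · set ℓ : AffineSubspace F (Fin t → F) := affineSpan F {x, y} with hℓ
      have hdir : Module.finrank F ℓ.direction = 1 := by
        rw [hℓ, direction_affineSpan, vectorSpan_pair]
        exact finrank_span_singleton (sub_ne_zero.mpr hxy)
      have hxℓ : x ∈ ℓ := mem_affineSpan F (by simp)
      have hyℓ : y ∈ ℓ := mem_affineSpan F (by simp)
      have hsub : ({x, y} : Set (Fin t → F)) ⊆ S ∩ ℓ := by
        rintro z (rfl | rfl)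
        exacts [⟨hx, hxℓ⟩, ⟨hy, hyℓ⟩]
      have hcard : 2 ≤ (S ∩ (ℓ : Set (Fin t → F))).ncard := by
        have := Set.ncard_le_ncard hsub (Set.toFinite _)
        rwa [Set.ncard_pair hxy] at this
      have hmem : a • x + (1 - a) • y ∈ ℓ := by
        have : a • x + (1 - a) • y = AffineMap.lineMap y x a := by
          simp [AffineMap.lineMap_apply]
          module
        rw [this, hℓ, Set.pair_comm x y]
        exact AffineMap.lineMap_mem_affineSpan_pair a y x
      exact hline ℓ hdir hcard hmem
  -- Step 2: parallelogram closure
  obtain ⟨lam, _, hlam⟩ : ∃ lam : F, lam ∈ (Finset.univ : Finset F) ∧ lam ∉ ({0, 1} : Finset F) := by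
    apply Finset.exists_of_ssubset
    rw [Finset.ssubset_univ_iff]
    intro h
    have h2 : ({0, 1} : Finset F).card ≤ 2 := (Finset.card_insert_le _ _).trans (by simp)
    rw [h, Finset.card_univ] at h2
    omega
  simp only [Finset.mem_insert, Finset.mem_singleton, not_or] at hlam
  obtain ⟨hl0, hl1⟩ := hlam
  have hl1' : 1 - lam ≠ 0 := sub_ne_zero.mpr (Ne.symm hl1)
  have para : ∀ x ∈ S, ∀ y ∈ S, ∀ z ∈ S, x - y + z ∈ S := by
    intro x hx y hy z hz
    have hu : lam • x + (1 - lam) • z ∈ S := lm x hx z hz lam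
    set u := lam • x + (1 - lam) • z
    set mu := (1 - lam)⁻¹ with hmu
    have hw : mu • u + (1 - mu) • y ∈ S := lm u hu y hy mu
    set w := mu • u + (1 - mu) • y
    set nu := (1 - lam) / lam with hnu
    have hfinal : nu • w + (1 - nu) • z ∈ S := lm w hw z hz nu
    have heq : x - y + z = nu • w + (1 - nu) • z := by
      funext i
      simp only [w, u, nu, mu, Pi.add_apply, Pi.sub_apply, Pi.smul_apply, smul_eq_mul]
      field_simp
      ring
    rwa [heq]
  -- Step 3: S is an affine subspace
  let A : AffineSubspace F (Fin t → F) :=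
    { carrier := S
      smul_vsub_vadd_mem' := by
        intro c x y z hx hy hz
        have h1 : c • x + (1 - c) • y ∈ S := lm x hx y hy c
        have h2 : (c • x + (1 - c) • y) - y + z ∈ S := para _ h1 y hy z hz
        have heq : c • (x -ᵥ y) +ᵥ z = (c • x + (1 - c) • y) - y + z := by
          funext i
          simp only [vsub_eq_sub, vadd_eq_add, Pi.add_apply, Pi.sub_apply, Pi.smul_apply,
            smul_eq_mul]
          ring
        rwa [heq] }
  have hA : A = ⊤ := by
    apply top_unique
    rw [← hspan]
    apply affineSpan_le.mpr
    rintro _ ⟨i, rfl⟩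
    exact hPS i
  ext x
  simp only [Set.mem_univ, iff_true]
  have : x ∈ A := hA ▸ AffineSubspace.mem_top F _ x
  exact this
end

section
/- Let m ≥ 2 be an integer and S ⊆ F_q^t a set containing t+1 points in general position. If every affine line meeting S in at least two points contains at least m+1 points of S, then #S ≥ (m^{t+1} − 1)/(m − 1). -/
open Module

private lemma line_eq' {F : Type*} [Field F] [Fintype F] {n : ℕ}
    {ℓ : AffineSubspace F (Fin n → F)} (h1 : Module.finrank F ℓ.direction = 1)
    {a b : Fin n → F} (ha : a ∈ ℓ) (hb : b ∈ ℓ) (hab : a ≠ b) :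
    ℓ = affineSpan F {a, b} := by
  have hs : ({a, b} : Set (Fin n → F)) ⊆ (ℓ : Set (Fin n → F)) := by
    rintro x (rfl | rfl)
    · exact ha
    · exact hb
  have hle : affineSpan F {a, b} ≤ ℓ := affineSpan_le.2 hs
  have hd : (affineSpan F ({a, b} : Set (Fin n → F))).direction = ℓ.direction := by
    refine Submodule.eq_of_le_of_finrank_le (AffineSubspace.direction_le hle) ?_
    rw [h1, direction_affineSpan, vectorSpan_pair]
    have hne : a -ᵥ b ≠ 0 := vsub_ne_zero.2 hab
    rw [finrank_span_singleton hne]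
  exact (AffineSubspace.ext_of_direction_eq hd.symm
    ⟨a, ha, left_mem_affineSpan_pair F a b⟩)

private lemma geom_mul' (m : ℕ) (hm : 2 ≤ m) :
    ∀ s : ℕ, (m - 1) * ∑ i ∈ Finset.range s, m ^ i = m ^ s - 1 := by
  intro s
  induction s with
  | zero => simp
  | succ s ih =>
    rw [geom_sum_succ]
    have h1 : 1 ≤ m ^ s := Nat.one_le_pow _ _ (by omega)
    have h2 : 1 ≤ m ^ (s + 1) := Nat.one_le_pow _ _ (by omega)
    have hm1 : 1 ≤ m := by omega
    zify [h1, h2, hm1] at ih ⊢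
    linear_combination (m : ℤ) * ih

private lemma geom_div' (m : ℕ) (hm : 2 ≤ m) (t : ℕ) :
    (m ^ (t + 1) - 1) / (m - 1) = ∑ i ∈ Finset.range (t + 1), m ^ i := by
  refine Nat.div_eq_of_eq_mul_left (by omega) ?_
  rw [mul_comm]
  exact (geom_mul' m hm (t + 1)).symm

private lemma aux_count {F : Type*} [Field F] [Fintype F] {n : ℕ} (m : ℕ) (hm : 2 ≤ m) :
    ∀ (t : ℕ) (S : Set (Fin n → F)) (P : Fin (t + 1) → Fin n → F),
      (∀ i, P i ∈ S) → AffineIndependent F P →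
      (∀ ℓ : AffineSubspace F (Fin n → F),
        Module.finrank F ℓ.direction = 1 → 2 ≤ (S ∩ ℓ).ncard →
        m + 1 ≤ (S ∩ ℓ).ncard) →
      ∑ i ∈ Finset.range (t + 1), m ^ i ≤ (S ∩ affineSpan F (Set.range P)).ncard := by
  intro t
  induction t with
  | zero =>
    intro S P hPS _ _
    have hne : (S ∩ (affineSpan F (Set.range P) : Set (Fin n → F))).Nonempty :=
      ⟨P 0, hPS 0, subset_affineSpan F _ ⟨0, rfl⟩⟩
    have := (Set.ncard_pos (Set.toFinite _)).2 hne
    simpa using Nat.succ_le_of_lt this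
  | succ t ih =>
    intro S P hPS hP hline
    classical
    set p₀ := P 0 with hp₀
    set P' : Fin (t + 1) → Fin n → F := P ∘ Fin.succ with hP'def
    set H := affineSpan F (Set.range P') with hHdef
    have hP' : AffineIndependent F P' :=
      hP.comp_embedding ⟨Fin.succ, Fin.succ_injective _⟩
    have hk := ih S P' (fun i => hPS _) hP' hline
    -- p₀ ∉ H
    have hrange : Set.range P' = P '' (Set.univ \ {0}) := by
      ext x
      constructor
      · rintro ⟨j, rfl⟩
        exact ⟨j.succ, ⟨trivial, Fin.succ_ne_zero j⟩, rfl⟩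
      · rintro ⟨i, ⟨-, hi⟩, rfl⟩
        have hi' : i ≠ 0 := hi
        obtain ⟨j, rfl⟩ := Fin.exists_succ_eq.2 hi'
        exact ⟨j, rfl⟩
    have h0 : p₀ ∉ H := by
      rw [hHdef, hrange]
      exact hP.notMem_affineSpan_diff 0 Set.univ
    have hSH_ne : ∀ Q ∈ S ∩ (H : Set (Fin n → F)), Q ≠ p₀ := by
      intro Q hQ h
      exact h0 (h ▸ hQ.2)
    set L : (Fin n → F) → AffineSubspace F (Fin n → F) :=
      fun Q => affineSpan F {p₀, Q} with hLdef
    have hmem_line : ∀ Q, p₀ ∈ L Q ∧ Q ∈ L Q :=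
      fun Q => ⟨left_mem_affineSpan_pair F _ _, right_mem_affineSpan_pair F _ _⟩
    have hLdir : ∀ Q, Q ≠ p₀ → Module.finrank F (L Q).direction = 1 := by
      intro Q hQ
      rw [hLdef]
      simp only
      rw [direction_affineSpan, vectorSpan_pair]
      exact finrank_span_singleton (vsub_ne_zero.2 (Ne.symm hQ))
    have hline_card : ∀ Q ∈ S ∩ (H : Set (Fin n → F)), m + 1 ≤ (S ∩ L Q).ncard := by
      intro Q hQ
      refine hline _ (hLdir Q (hSH_ne Q hQ)) ?_
      have : 1 < (S ∩ (L Q : Set (Fin n → F))).ncard :=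
        (Set.one_lt_ncard (Set.toFinite _)).2
          ⟨p₀, ⟨hPS 0, (hmem_line Q).1⟩, Q, ⟨hQ.1, (hmem_line Q).2⟩,
            Ne.symm (hSH_ne Q hQ)⟩
      omega
    have hline_inter_H : ∀ Q ∈ S ∩ (H : Set (Fin n → F)), ∀ y,
        y ∈ L Q → y ∈ H → y = Q := by
      intro Q hQ y hy hyH
      by_contra hne
      have h1 : L Q = affineSpan F {Q, y} :=
        line_eq' (hLdir Q (hSH_ne Q hQ)) (hmem_line Q).2 hy (fun h => hne h.symm)
      have h2 : L Q ≤ H := by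
        rw [h1]
        refine affineSpan_le.2 ?_
        rintro x (rfl | rfl)
        · exact hQ.2
        · exact hyH
      exact h0 (h2 (hmem_line Q).1)
    have hline_eq : ∀ Q ∈ S ∩ (H : Set (Fin n → F)), ∀ x,
        x ∈ L Q → x ≠ p₀ → L Q = affineSpan F {p₀, x} := by
      intro Q hQ x hx hxne
      exact line_eq' (hLdir Q (hSH_ne Q hQ)) (hmem_line Q).1 hx (Ne.symm hxne)
    -- finsets
    set A : Finset (Fin n → F) := (Set.toFinite (S ∩ (H : Set (Fin n → F)))).toFinset with hAdef
    set B : (Fin n → F) → Finset (Fin n → F) :=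
      fun Q => (Set.toFinite ((S ∩ (L Q : Set (Fin n → F))) \
        ((H : Set (Fin n → F)) ∪ {p₀}))).toFinset with hBdef
    have hAmem : ∀ x, x ∈ A ↔ x ∈ S ∩ (H : Set (Fin n → F)) := by
      intro x; rw [hAdef]; exact Set.Finite.mem_toFinset _
    have hBmem : ∀ Q x, x ∈ B Q ↔ x ∈ (S ∩ (L Q : Set (Fin n → F))) \
        ((H : Set (Fin n → F)) ∪ {p₀}) := by
      intro Q x; rw [hBdef]; exact Set.Finite.mem_toFinset _
    have hAcard : A.card = (S ∩ (H : Set (Fin n → F))).ncard :=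
      (Set.ncard_eq_toFinset_card _ _).symm
    have hBcard : ∀ Q ∈ A, m - 1 ≤ (B Q).card := by
      intro Q hQ'
      have hQ : Q ∈ S ∩ (H : Set (Fin n → F)) := (hAmem Q).1 hQ'
      have h3 : (S ∩ (L Q : Set (Fin n → F))) \ ({Q, p₀} : Set (Fin n → F)) ⊆
          (S ∩ (L Q : Set (Fin n → F))) \ ((H : Set (Fin n → F)) ∪ {p₀}) := by
        rintro x ⟨⟨hxS, hxL⟩, hx⟩
        refine ⟨⟨hxS, hxL⟩, ?_⟩
        rintro (h | h)
        · exact hx (Or.inl (hline_inter_H Q hQ x hxL h))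
        · exact hx (Or.inr h)
      have h4 : (S ∩ (L Q : Set (Fin n → F))).ncard ≤
          ((S ∩ (L Q : Set (Fin n → F))) \ ({Q, p₀} : Set (Fin n → F))).ncard +
          ({Q, p₀} : Set (Fin n → F)).ncard :=
        Set.ncard_le_ncard_diff_add_ncard _ _ (Set.toFinite _)
      have h5 : ({Q, p₀} : Set (Fin n → F)).ncard ≤ 2 := by
        apply le_trans (Set.ncard_insert_le _ _)
        simp
      have h6 := Set.ncard_le_ncard h3 (Set.toFinite _)
      have h7 := hline_card Q hQ
      have h8 : (B Q).card = ((S ∩ (L Q : Set (Fin n → F))) \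
          ((H : Set (Fin n → F)) ∪ {p₀})).ncard := by
        rw [hBdef]; exact (Set.ncard_eq_toFinset_card _ _).symm
      omega
    have hBdisj : ∀ Q ∈ A, ∀ Q' ∈ A, Q ≠ Q' → Disjoint (B Q) (B Q') := by
      intro Q hQ' Q' hQ'' hne
      rw [Finset.disjoint_left]
      intro x hx hx'
      have hxm := (hBmem Q x).1 hx
      have hxm' := (hBmem Q' x).1 hx'
      have hQS : Q ∈ S ∩ (H : Set (Fin n → F)) := (hAmem Q).1 hQ'
      have hQ'S : Q' ∈ S ∩ (H : Set (Fin n → F)) := (hAmem Q').1 hQ''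
      have hxp : x ≠ p₀ := fun h => hxm.2 (Or.inr h)
      have e1 : L Q = affineSpan F {p₀, x} := hline_eq Q hQS x hxm.1.2 hxp
      have e2 : L Q' = affineSpan F {p₀, x} := hline_eq Q' hQ'S x hxm'.1.2 hxp
      have eLL : L Q = L Q' := e1.trans e2.symm
      have : Q' = Q := by
        refine hline_inter_H Q hQS Q' ?_ hQ'S.2
        rw [eLL]
        exact (hmem_line Q').2
      exact hne this.symm
    -- inclusion into target
    have hHle : H ≤ affineSpan F (Set.range P) := by
      rw [hHdef]
      apply affineSpan_mono
      rintro x ⟨j, rfl⟩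
      exact ⟨j.succ, rfl⟩
    have hsub : insert p₀ A ∪ A.biUnion B ⊆
        (Set.toFinite (S ∩ (affineSpan F (Set.range P) : Set (Fin n → F)))).toFinset := by
      intro x hx
      rw [Set.Finite.mem_toFinset]
      rcases Finset.mem_union.1 hx with hx | hx
      · rcases Finset.mem_insert.1 hx with rfl | hxA
        · exact ⟨hPS 0, subset_affineSpan F _ ⟨0, rfl⟩⟩
        · have := (hAmem x).1 hxA
          exact ⟨this.1, hHle this.2⟩
      · obtain ⟨Q, hQ, hxB⟩ := Finset.mem_biUnion.1 hx
        have hxm := (hBmem Q x).1 hxB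
        have hQS : Q ∈ S ∩ (H : Set (Fin n → F)) := (hAmem Q).1 hQ
        have hLle : L Q ≤ affineSpan F (Set.range P) := by
          rw [hLdef]
          refine affineSpan_le.2 ?_
          rintro y (rfl | rfl)
          · exact subset_affineSpan F _ ⟨0, rfl⟩
          · exact hHle hQS.2
        exact ⟨hxm.1.1, hLle hxm.1.2⟩
    have hdisj2 : Disjoint (insert p₀ A) (A.biUnion B) := by
      rw [Finset.disjoint_left]
      intro x hx hx'
      obtain ⟨Q, hQ, hxB⟩ := Finset.mem_biUnion.1 hx'
      have hxm := (hBmem Q x).1 hxB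
      rcases Finset.mem_insert.1 hx with rfl | hxA
      · exact hxm.2 (Or.inr rfl)
      · exact hxm.2 (Or.inl ((hAmem x).1 hxA).2)
    have hp₀A : p₀ ∉ A := fun h => h0 ((hAmem p₀).1 h).2
    -- counting
    set k := (S ∩ (H : Set (Fin n → F))).ncard with hkdef
    have hcount : m * k + 1 ≤
        (S ∩ (affineSpan F (Set.range P) : Set (Fin n → F))).ncard := by
      have c1 : (insert p₀ A ∪ A.biUnion B).card ≤
          (S ∩ (affineSpan F (Set.range P) : Set (Fin n → F))).ncard := by
        rw [Set.ncard_eq_toFinset_card _ (Set.toFinite _)]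
        exact Finset.card_le_card hsub
      rw [Finset.card_union_of_disjoint hdisj2, Finset.card_insert_of_notMem hp₀A,
        Finset.card_biUnion hBdisj, hAcard] at c1
      have c2 : A.card * (m - 1) ≤ ∑ Q ∈ A, (B Q).card := by
        calc A.card * (m - 1) = ∑ _Q ∈ A, (m - 1) := by
              rw [Finset.sum_const, smul_eq_mul]
          _ ≤ ∑ Q ∈ A, (B Q).card := Finset.sum_le_sum hBcard
      rw [hAcard] at c2
      have hmk : k + 1 + k * (m - 1) = m * k + 1 := by
        obtain ⟨m', rfl⟩ : ∃ m', m = m' + 1 := ⟨m - 1, by omega⟩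
        simp only [Nat.add_sub_cancel]
        ring
      omega
    calc ∑ i ∈ Finset.range (t + 1 + 1), m ^ i
        = m * ∑ i ∈ Finset.range (t + 1), m ^ i + 1 := geom_sum_succ
      _ ≤ m * k + 1 := by
          have := Nat.mul_le_mul_left m hk
          omega
      _ ≤ _ := hcount

theorem lemma2_iv
    (F : Type*) [Field F] [Fintype F]
    (m : ℕ) (hm : 2 ≤ m)
    (t : ℕ) (S : Set (Fin t → F))
    (P : Fin (t + 1) → Fin t → F)
    (hPS : ∀ i, P i ∈ S)
    (hspan : affineSpan F (Set.range P) = ⊤)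
    (hline : ∀ ℓ : AffineSubspace F (Fin t → F),
      Module.finrank F ℓ.direction = 1 → 2 ≤ (S ∩ ℓ).ncard →
      m + 1 ≤ (S ∩ ℓ).ncard) :
    (m ^ (t + 1) - 1) / (m - 1) ≤ S.ncard := by
  have hP : AffineIndependent F P := by
    rw [affineIndependent_iff_finrank_vectorSpan_eq F P (Fintype.card_fin _)]
    rw [← direction_affineSpan, hspan, AffineSubspace.direction_top,
      finrank_top]
    exact Module.finrank_fin_fun F
  have h := aux_count m hm t S P hPS hP hline
  rw [hspan] at h
  rw [geom_div' m hm t]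
  simpa using h
end

section
/- Let f_1,...,f_r be polynomials over F_q in n variables with degrees summing to d < n. If the common zero set Z in F_q^n is nonempty and is not an affine subspace of F_q^n, then #Z > q^{n−d}. -/
set_option linter.unusedSectionVars false
set_option maxHeartbeats 1000000

open MvPolynomial Finset

section Aux
variable {F : Type*} [Field F] [Fintype F]

local notation "q" => Fintype.card F

lemma aux_sum_pow (k : ℕ) (hk : k ≠ 0) :
    (∑ x : F, x ^ k) = if (q - 1) ∣ k then (-1 : F) else 0 := by
  classical
  have h1 : ∑ x ∈ (univ : Finset F).erase 0, x ^ k + (0:F) ^ k = ∑ x : F, x ^ k :=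
    Finset.sum_erase_add _ _ (mem_univ 0)
  have h2 : ∑ x ∈ (univ : Finset F).erase 0, x ^ k = ∑ x : Fˣ, ((x : F)) ^ k := by
    refine Finset.sum_nbij' (i := fun x => if h : x = 0 then 1 else Units.mk0 x h)
      (j := fun u => (u : F)) ?_ ?_ ?_ ?_ ?_
    · intro a _; exact mem_univ _
    · intro u _
      exact Finset.mem_erase.mpr ⟨Units.ne_zero u, mem_univ _⟩
    · intro a ha
      have : a ≠ 0 := (Finset.mem_erase.mp ha).1
      simp [this]
    · intro u _
      simp [Units.ne_zero u]
    · intro a ha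
      have h : a ≠ 0 := (Finset.mem_erase.mp ha).1
      simp [h]
  rw [← h1, h2, zero_pow hk, add_zero, ← FiniteField.sum_pow_units F k]

lemma exists_linear_rep {n m : ℕ} (ℓ : (Fin n → F) →ₗ[F] (Fin m → F)) :
    ∃ L : Fin m → MvPolynomial (Fin n) F,
      (∀ x j, eval x (L j) = ℓ x j) ∧ ∀ j, (L j).totalDegree ≤ 1 := by
  classical
  refine ⟨fun j => ∑ i, C (ℓ (Pi.single i 1) j) * X i, ?_, ?_⟩
  · intro x j
    have hx : ∑ i, x i • (Pi.single i (1:F) : Fin n → F) = x := by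
      funext t
      rw [Finset.sum_apply]
      simp [Pi.single_apply, mul_ite]
    simp only [map_sum, map_mul, eval_C, eval_X]
    conv_rhs => rw [← hx]
    rw [map_sum]
    rw [Finset.sum_apply]
    refine Finset.sum_congr rfl ?_
    intro i _
    rw [map_smul]
    simp [mul_comm]
  · intro j
    refine le_trans (totalDegree_finset_sum _ _) (Finset.sup_le ?_)
    intro i _
    refine le_trans (totalDegree_mul _ _) ?_
    rw [totalDegree_C, totalDegree_X]

open scoped Classical in
lemma aux_congr {n m : ℕ} (hm : 1 ≤ m) (ℓ : (Fin n → F) →ₗ[F] (Fin m → F))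
    (Zf : Finset (Fin n → F))
    (hM : ∀ Q : MvPolynomial (Fin n) F, Q.totalDegree < (q - 1) * m →
      ∑ z ∈ Zf, eval z Q = 0) :
    ∃ cst : F, ∀ b : Fin m → F,
      (((Zf.filter (fun z => ℓ z = b)).card : ℕ) : F) = cst := by
  classical
  have hq2 : 2 ≤ q := Fintype.one_lt_card
  have hq1 : q - 1 ≠ 0 := by omega
  obtain ⟨L, hLeval, hLdeg⟩ := exists_linear_rep ℓ
  set A : MvPolynomial (Fin n) F := ∏ j : Fin m, (- (L j ^ (q-1))) with hA
  refine ⟨∑ z ∈ Zf, eval z A, ?_⟩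
  intro b
  set Ib : MvPolynomial (Fin n) F := ∏ j, (1 - (L j - C (b j)) ^ (q-1)) with hIb
  have hIeval : ∀ x, eval x Ib = if ℓ x = b then 1 else 0 := by
    intro x
    simp only [hIb, map_prod, map_sub, map_one, map_pow, eval_C, hLeval]
    by_cases hxb : ℓ x = b
    · rw [if_pos hxb]
      apply Finset.prod_eq_one
      intro j _
      rw [hxb, sub_self, zero_pow hq1, sub_zero]
    · rw [if_neg hxb]
      obtain ⟨j, hj⟩ : ∃ j, ℓ x j ≠ b j := by
        by_contra hc
        push_neg at hc
        exact hxb (funext hc)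
      refine Finset.prod_eq_zero (mem_univ j) ?_
      rw [FiniteField.pow_card_sub_one_eq_one _ (sub_ne_zero.mpr hj), sub_self]
  have hcount : (((Zf.filter fun z => ℓ z = b).card : ℕ) : F) = ∑ z ∈ Zf, eval z Ib := by
    rw [Finset.sum_congr rfl (fun z _ => hIeval z), Finset.sum_boole]
  -- degree estimate
  have hRdeg : ∀ j, (1 - ((L j - C (b j)) ^ (q-1) - L j ^ (q-1))).totalDegree ≤ q - 2 := by
    intro j
    have hexp : (L j - C (b j)) ^ (q-1) - L j ^ (q-1)
        = ∑ k ∈ Finset.range (q-1), L j ^ k * (- C (b j)) ^ (q-1-k)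
            * ((Nat.choose (q-1) k : ℕ) : MvPolynomial (Fin n) F) := by
      have h := add_pow (L j) (- C (b j)) (q-1)
      rw [← sub_eq_add_neg] at h
      rw [h, Finset.sum_range_succ, Nat.sub_self, pow_zero, mul_one, Nat.choose_self,
        Nat.cast_one, mul_one, add_sub_cancel_right]
    refine le_trans (totalDegree_sub _ _) ?_
    rw [totalDegree_one, hexp]
    rw [Nat.max_le]
    refine ⟨by omega, le_trans (totalDegree_finset_sum _ _) (Finset.sup_le ?_)⟩
    intro k hk
    rw [Finset.mem_range] at hk
    refine le_trans (totalDegree_mul _ _) ?_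
    have h1 : (L j ^ k).totalDegree ≤ k := by
      refine le_trans (totalDegree_pow _ _) ?_
      calc k * (L j).totalDegree ≤ k * 1 := Nat.mul_le_mul_left _ (hLdeg j)
        _ = k := mul_one k
    have h2 : (((- C (b j)) : MvPolynomial (Fin n) F) ^ (q-1-k)).totalDegree = 0 := by
      rw [← C_neg, ← C_pow, totalDegree_C]
    have h3 : (((Nat.choose (q-1) k : ℕ) : MvPolynomial (Fin n) F)).totalDegree = 0 := by
      rw [← map_natCast (C : F →+* MvPolynomial (Fin n) F), totalDegree_C]
    have hb := totalDegree_mul (L j ^ k * (-C (b j)) ^ (q-1-k))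
      (((Nat.choose (q-1) k : ℕ) : MvPolynomial (Fin n) F))
    have hc := totalDegree_mul (L j ^ k) ((-C (b j) : MvPolynomial (Fin n) F) ^ (q-1-k))
    omega
  have hAdeg : ∀ (t : Finset (Fin m)), (∏ j ∈ t, (- (L j ^ (q-1)))).totalDegree
      ≤ t.card * (q-1) := by
    intro t
    refine le_trans (totalDegree_finset_prod _ _) ?_
    refine le_trans (Finset.sum_le_card_nsmul _ _ (q-1) ?_) (le_of_eq (smul_eq_mul _ _))
    intro j _
    rw [totalDegree_neg]
    refine le_trans (totalDegree_pow _ _) ?_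
    calc (q-1) * (L j).totalDegree ≤ (q-1) * 1 := Nat.mul_le_mul_left _ (hLdeg j)
      _ = q - 1 := mul_one _
  have hsplit : Ib = ∑ t : Finset (Fin m), (∏ j ∈ t, (- (L j ^ (q-1)))) *
      ∏ j ∈ tᶜ, (1 - ((L j - C (b j)) ^ (q-1) - L j ^ (q-1))) := by
    rw [hIb]
    rw [show (fun j => 1 - (L j - C (b j)) ^ (q-1)) = fun j =>
      (- (L j ^ (q-1))) + (1 - ((L j - C (b j)) ^ (q-1) - L j ^ (q-1))) from funext (fun j => by ring)]
    exact Fintype.prod_add _ _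
  have hdiff : (Ib - A).totalDegree < (q-1) * m := by
    have hIbA : Ib - A = ∑ t ∈ (univ : Finset (Finset (Fin m))).erase univ,
        (∏ j ∈ t, (- (L j ^ (q-1)))) *
        ∏ j ∈ tᶜ, (1 - ((L j - C (b j)) ^ (q-1) - L j ^ (q-1))) := by
      have h2 : (∏ j ∈ (univ : Finset (Fin m)), (- (L j ^ (q-1)))) *
          (∏ j ∈ (univ : Finset (Fin m))ᶜ, (1 - ((L j - C (b j)) ^ (q-1) - L j ^ (q-1)))) = A := by
        rw [Finset.compl_univ, Finset.prod_empty, mul_one, hA]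
      rw [hsplit, ← Finset.sum_erase_add _ _ (mem_univ (univ : Finset (Fin m))), h2]
      ring
    rw [hIbA]
    refine lt_of_le_of_lt (totalDegree_finset_sum _ _) ?_
    rw [Finset.sup_lt_iff (by positivity : (0:ℕ) < (q-1) * m)]
    intro t ht
    have htne : t ≠ univ := (Finset.mem_erase.mp ht).1
    have htcard : t.card < m := by
      have h3 := Finset.card_lt_card (Finset.ssubset_univ_iff.mpr htne)
      rwa [Finset.card_univ, Fintype.card_fin] at h3
    refine lt_of_le_of_lt (totalDegree_mul _ _) ?_
    have h1 := hAdeg t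
    have h2 : (∏ j ∈ tᶜ, (1 - ((L j - C (b j)) ^ (q-1) - L j ^ (q-1)))).totalDegree
        ≤ tᶜ.card * (q-2) := by
      refine le_trans (totalDegree_finset_prod _ _) ?_
      refine le_trans (Finset.sum_le_card_nsmul _ _ (q-2) (fun j _ => hRdeg j)) ?_
      rw [smul_eq_mul]
    have h3 : tᶜ.card = m - t.card := by
      rw [Finset.card_compl, Fintype.card_fin]
    rw [h3] at h2
    have h4 : (m - t.card) * (q-2) < (m - t.card) * (q-1) :=
      mul_lt_mul_of_pos_left (by omega) (by omega)
    have h5 : t.card * (q-1) + (m - t.card) * (q-1) = (q-1) * m := by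
      rw [← Nat.add_mul, Nat.add_sub_cancel' htcard.le, Nat.mul_comm]
    omega
  have h0 := hM (Ib - A) hdiff
  have h1 : ∑ z ∈ Zf, eval z (Ib - A) = (∑ z ∈ Zf, eval z Ib) - ∑ z ∈ Zf, eval z A := by
    rw [← Finset.sum_sub_distrib]
    exact Finset.sum_congr rfl (fun z _ => by rw [map_sub])
  rw [h1] at h0
  rw [hcount]
  exact sub_eq_zero.mp h0


lemma exists_reduced_rep {m : ℕ} (g : (Fin m → F) → F) :
    ∃ Φ : MvPolynomial (Fin m) F, (∀ b, eval b Φ = g b) ∧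
      ∀ α ∈ Φ.support, ∀ j, α j ≤ q - 1 := by
  classical
  refine ⟨∑ a : Fin m → F, C (g a) * indicator a, ?_, ?_⟩
  · intro b
    rw [map_sum]
    rw [Finset.sum_eq_single b]
    · rw [map_mul, eval_C, eval_indicator_apply_eq_one, mul_one]
    · intro a _ hab
      rw [map_mul, eval_indicator_apply_eq_zero _ _ (Ne.symm hab), mul_zero]
    · intro h; exact absurd (mem_univ b) h
  · have hmem : (∑ a : Fin m → F, C (g a) * indicator a) ∈
        restrictDegree (Fin m) F (q - 1) := by
      apply Submodule.sum_mem
      intro a _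
      rw [← smul_eq_C_mul]
      exact Submodule.smul_mem _ _ (indicator_mem_restrictDegree a)
    rw [mem_restrictDegree] at hmem
    exact hmem

lemma aux_greedy {n : ℕ} (d : ℕ) (hdn : d < n) (Zf : Finset (Fin n → F)) (z₀ : Fin n → F)
    (hcard : Zf.card ≤ q ^ (n - d)) :
    ∃ U : Submodule F (Fin n → F), Module.finrank F U = d ∧
      ∀ z ∈ Zf, z - z₀ ∈ U → z = z₀ := by
  classical
  have hq2 : 2 ≤ q := Fintype.one_lt_card
  suffices h : ∀ k, k ≤ d → ∃ U : Submodule F (Fin n → F), Module.finrank F U = k ∧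
      ∀ z ∈ Zf, z - z₀ ∈ U → z = z₀ from h d le_rfl
  intro k hk
  induction k with
  | zero =>
    refine ⟨⊥, finrank_bot F _, fun z _ hz => ?_⟩
    rw [Submodule.mem_bot, sub_eq_zero] at hz
    exact hz
  | succ k ih =>
    obtain ⟨U, hUrank, hU⟩ := ih (le_trans (Nat.le_succ k) hk)
    have hrank_sup : ∀ w : Fin n → F, Module.finrank F ↥(U ⊔ Submodule.span F {w}) ≤ k + 1 := by
      intro w
      have h1 : Module.finrank F ↥(Submodule.span F ({w} : Set (Fin n → F))) ≤ 1 := by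
        rcases eq_or_ne w 0 with rfl | hw
        · rw [Submodule.span_zero_singleton]
          simp [finrank_bot]
        · rw [finrank_span_singleton hw]
      have h2 := Submodule.finrank_sup_add_finrank_inf_eq U (Submodule.span F {w})
      have h3 : Module.finrank F ↥(U ⊔ Submodule.span F {w}) ≤
          Module.finrank F ↥U + Module.finrank F ↥(Submodule.span F ({w} : Set (Fin n → F))) := by
        rw [← h2]; exact Nat.le_add_right _ _
      omega
    have hcard_sub : ∀ (S : Submodule F (Fin n → F)), Module.finrank F ↥S ≤ k + 1 →
        (S : Set (Fin n → F)).toFinset.card ≤ q ^ (k+1) := by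
      intro S hS
      rw [Set.toFinset_card]
      have hcc : Fintype.card ↥(S : Set (Fin n → F)) = Fintype.card ↥S :=
        Fintype.card_congr (Equiv.subtypeEquivRight (fun _ => Iff.rfl))
      rw [hcc, Module.card_eq_pow_finrank (K := F) (V := S)]
      exact Nat.pow_le_pow_right (by omega) hS
    set W : (Fin n → F) → Submodule F (Fin n → F) := fun z => U ⊔ Submodule.span F {z - z₀} with hW
    set bad : Finset (Fin n → F) :=
      (U : Set (Fin n → F)).toFinset ∪ Zf.biUnion (fun z => ((W z : Set (Fin n → F))).toFinset \ (U : Set (Fin n → F)).toFinset)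
      with hbad
    have hUcard : (U : Set (Fin n → F)).toFinset.card = q ^ k := by
      rw [Set.toFinset_card]
      have hcc : Fintype.card ↥(U : Set (Fin n → F)) = Fintype.card ↥U :=
        Fintype.card_congr (Equiv.subtypeEquivRight (fun _ => Iff.rfl))
      rw [hcc, Module.card_eq_pow_finrank (K := F) (V := U), hUrank]
    have hUsubW : ∀ z, (U : Set (Fin n → F)).toFinset ⊆ ((W z : Set (Fin n → F))).toFinset := by
      intro z
      intro x hx
      rw [Set.mem_toFinset] at hx ⊢
      exact Submodule.mem_sup_left hx
    have hbadcard : bad.card < q ^ n := by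
      have h1 : bad.card ≤ q ^ k + Zf.card * (q ^ (k+1) - q ^ k) := by
        refine le_trans (Finset.card_union_le _ _) ?_
        rw [hUcard]
        refine Nat.add_le_add_left (le_trans (Finset.card_biUnion_le) ?_) _
        refine le_trans (Finset.sum_le_card_nsmul _ _ (q ^ (k+1) - q ^ k) ?_) ?_
        · intro z _
          rw [Finset.card_sdiff_of_subset (hUsubW z), hUcard]
          exact Nat.sub_le_sub_right (hcard_sub _ (hrank_sup _)) _
        · rw [smul_eq_mul]
      have h2 : Zf.card * (q ^ (k+1) - q ^ k) ≤ q ^ (n-d) * (q ^ (k+1) - q ^ k) :=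
        Nat.mul_le_mul_right _ hcard
      have h3 : q ^ (n-d) * (q ^ (k+1) - q ^ k) + q ^ (n-d) * q ^ k
          = q ^ (n-d) * q ^ (k+1) := by
        rw [← Nat.mul_add, Nat.sub_add_cancel (Nat.pow_le_pow_right (by omega) (Nat.le_succ k))]
      have h4 : q ^ (n-d) * q ^ (k+1) = q ^ (n - d + (k+1)) := by rw [← pow_add]
      have h5 : q ^ (n-d) * q ^ k = q ^ (n - d + k) := by rw [← pow_add]
      have h6 : q ^ (n - d + (k+1)) ≤ q ^ n := Nat.pow_le_pow_right (by omega) (by omega)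
      have h7 : q ^ k < q ^ (n - d + k) := Nat.pow_lt_pow_right (by omega) (by omega)
      omega
    have hex : ∃ v : Fin n → F, v ∉ bad := by
      by_contra hcon
      push_neg at hcon
      have : (univ : Finset (Fin n → F)) ⊆ bad := fun x _ => hcon x
      have hle := Finset.card_le_card this
      rw [Finset.card_univ] at hle
      have : Fintype.card (Fin n → F) = q ^ n := by
        rw [Module.card_eq_pow_finrank (K := F) (V := Fin n → F)]
        congr 1
        simp [Module.finrank_pi]
      omega
    obtain ⟨v, hv⟩ := hex
    have hvU : v ∉ U := by
      intro h
      exact hv (Finset.mem_union_left _ (Set.mem_toFinset.mpr h))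
    refine ⟨U ⊔ Submodule.span F {v}, ?_, ?_⟩
    · have hle : Module.finrank F ↥(U ⊔ Submodule.span F {v}) ≤ k + 1 := by
        have h1 : Module.finrank F ↥(Submodule.span F ({v} : Set (Fin n → F))) ≤ 1 := by
          rcases eq_or_ne v 0 with rfl | hw
          · rw [Submodule.span_zero_singleton]; simp [finrank_bot]
          · rw [finrank_span_singleton hw]
        have h2 := Submodule.finrank_sup_add_finrank_inf_eq U (Submodule.span F {v})
        have h3 : Module.finrank F ↥(U ⊔ Submodule.span F {v}) ≤
            Module.finrank F ↥U + Module.finrank F ↥(Submodule.span F ({v} : Set (Fin n → F))) := by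
          rw [← h2]; exact Nat.le_add_right _ _
        omega
      have hlt : U < U ⊔ Submodule.span F {v} := by
        refine lt_of_le_of_ne le_sup_left ?_
        intro hEq
        apply hvU
        rw [hEq]
        exact Submodule.mem_sup_right (Submodule.mem_span_singleton_self v)
      have := Submodule.finrank_lt_finrank_of_lt hlt
      omega
    · intro z hz hmem
      by_contra hne
      rw [Submodule.mem_sup] at hmem
      obtain ⟨u, hu, w, hw, huw⟩ := hmem
      rw [Submodule.mem_span_singleton] at hw
      obtain ⟨t, rfl⟩ := hw
      rcases eq_or_ne t 0 with rfl | ht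
      · rw [zero_smul, add_zero] at huw
        exact hne (hU z hz (huw ▸ hu))
      · have hvW : v ∈ W z := by
          have h1 : z - z₀ ∈ W z :=
            Submodule.mem_sup_right (Submodule.mem_span_singleton_self _)
          have h2 : u ∈ W z := Submodule.mem_sup_left hu
          have heq : t • v = (z - z₀) - u := eq_sub_of_add_eq' huw
          have h3 : t • v ∈ W z := heq ▸ Submodule.sub_mem _ h1 h2
          have := Submodule.smul_mem (W z) t⁻¹ h3
          rwa [smul_smul, inv_mul_cancel₀ ht, one_smul] at this
        apply hv
        refine Finset.mem_union_right _ (Finset.mem_biUnion.mpr ⟨z, hz, ?_⟩)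
        rw [Finset.mem_sdiff, Set.mem_toFinset, Set.mem_toFinset]
        exact ⟨hvW, hvU⟩

lemma eval_affine {m : ℕ} (Φ : MvPolynomial (Fin m) F) (h : Φ.totalDegree ≤ 1)
    (a b e : Fin m → F) (c : F) :
    eval (c • (a - b) + e) Φ = c * (eval a Φ - eval b Φ) + eval e Φ := by
  classical
  rw [eval_eq', eval_eq', eval_eq', eval_eq']
  rw [← Finset.sum_sub_distrib, Finset.mul_sum, ← Finset.sum_add_distrib]
  refine Finset.sum_congr rfl ?_
  intro α hα
  have hle : (α.sum fun _ e => e) ≤ 1 := le_trans (le_totalDegree hα) h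
  have hsum : (∑ j, α j) ≤ 1 := by
    rw [← Finsupp.sum_fintype α (fun _ e => e) (fun _ => rfl)]
    exact hle
  rcases eq_or_ne α 0 with rfl | hne
  · simp
  · obtain ⟨j₀, hj₀⟩ : ∃ j₀, α j₀ ≠ 0 := by
      by_contra h'
      push_neg at h'
      exact hne (Finsupp.ext h')
    have hval : ∀ k, α k = if k = j₀ then 1 else 0 := by
      intro k
      rcases eq_or_ne k j₀ with rfl | hk
      · rw [if_pos rfl]
        have h1 : α k ≤ ∑ j, α j := Finset.single_le_sum (fun _ _ => Nat.zero_le _) (mem_univ k)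
        omega
      · rw [if_neg hk]
        have h1 : α k + α j₀ ≤ ∑ j, α j := by
          rw [← Finset.sum_pair hk]
          exact Finset.sum_le_sum_of_subset (Finset.subset_univ _)
        omega
    have hprod : ∀ x : Fin m → F, (∏ j, x j ^ α j) = x j₀ := by
      intro x
      rw [Finset.prod_congr rfl (fun k _ => by rw [hval k])]
      simp only [pow_ite, pow_one, pow_zero]
      rw [Finset.prod_ite_eq' univ j₀ x]
      simp
    rw [hprod, hprod, hprod, hprod]
    simp only [Pi.add_apply, Pi.smul_apply, Pi.sub_apply, smul_eq_mul]
    ring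

end Aux

theorem theorem2_i
    (F : Type*) [Field F] [Fintype F]
    (n r d : ℕ) (f : Fin r → MvPolynomial (Fin n) F)
    (hd : (∑ i, (f i).totalDegree) = d) (hdn : d < n)
    (Z : Set (Fin n → F))
    (hZ : Z = {x | ∀ i, MvPolynomial.eval x (f i) = 0})
    (hne : Z.Nonempty)
    (hnl : ∀ A : AffineSubspace F (Fin n → F), Z ≠ (A : Set (Fin n → F))) :
    Fintype.card F ^ (n - d) < Z.ncard := by
  classical
  by_contra hcon
  push_neg at hcon
  have hq2 : 2 ≤ Fintype.card F := Fintype.one_lt_card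
  set q : ℕ := Fintype.card F with hq
  set m : ℕ := n - d with hm
  have hm1 : 1 ≤ m := by omega
  set Zf : Finset (Fin n → F) := Z.toFinset with hZf
  have hZfm : ∀ z, z ∈ Zf ↔ z ∈ Z := fun z => Set.mem_toFinset
  have hcard : Zf.card ≤ q ^ m := by
    rw [hZf, ← Set.ncard_eq_toFinset_card' Z]
    exact hcon
  obtain ⟨z₀, hz₀⟩ := hne
  -- the indicator polynomial of Z
  set P : MvPolynomial (Fin n) F := ∏ i, (1 - (f i) ^ (q-1)) with hP
  have hPdeg : P.totalDegree ≤ (q-1) * d := by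
    refine le_trans (totalDegree_finset_prod _ _) ?_
    rw [← hd, Finset.mul_sum]
    refine Finset.sum_le_sum ?_
    intro i _
    refine le_trans (totalDegree_sub _ _) ?_
    rw [totalDegree_one, Nat.max_le]
    exact ⟨Nat.zero_le _, totalDegree_pow _ _⟩
  have hPeval : ∀ x, eval x P = if x ∈ Z then 1 else 0 := by
    intro x
    by_cases hx : x ∈ Z
    · rw [if_pos hx, hP, map_prod]
      refine Finset.prod_eq_one (fun i _ => ?_)
      have hfx : eval x (f i) = 0 := by rw [hZ] at hx; exact hx i
      rw [map_sub, map_one, map_pow, hfx, zero_pow (by omega : q - 1 ≠ 0), sub_zero]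
    · rw [if_neg hx]
      rw [hZ] at hx
      simp only [Set.mem_setOf_eq, not_forall] at hx
      obtain ⟨i, hi⟩ := hx
      rw [hP, map_prod]
      refine Finset.prod_eq_zero (mem_univ i) ?_
      rw [map_sub, map_one, map_pow,
        FiniteField.pow_card_sub_one_eq_one _ hi, sub_self]
  -- moments
  have hM : ∀ Q : MvPolynomial (Fin n) F, Q.totalDegree < (q - 1) * m →
      ∑ z ∈ Zf, eval z Q = 0 := by
    intro Q hQ
    have hdeg : (Q * P).totalDegree < (q - 1) * Fintype.card (Fin n) := by
      rw [Fintype.card_fin]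
      have h1 : (Q*P).totalDegree ≤ Q.totalDegree + P.totalDegree := totalDegree_mul _ _
      have h2 : (q-1)*m + (q-1)*d = (q-1)*n := by rw [← Nat.mul_add]; congr 1; omega
      omega
    have h0 := MvPolynomial.sum_eval_eq_zero (Q * P) hdeg
    rw [← h0]
    rw [← Finset.sum_subset (Finset.subset_univ Zf) ?van]
    case van =>
      intro x _ hx
      rw [map_mul, hPeval, if_neg (fun h => hx ((hZfm x).mpr h)), mul_zero]
    refine Finset.sum_congr rfl (fun z hz => ?_)
    rw [map_mul, hPeval, if_pos ((hZfm z).mp hz), mul_one]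
  -- greedy subspace
  obtain ⟨U, hUrank, hUexact⟩ := aux_greedy d hdn Zf z₀ hcard
  -- quotient functional
  have hfinV : Module.finrank F (Fin n → F) = n := by simp
  have hquot : Module.finrank F ((Fin n → F) ⧸ U) = m := by
    have h := Submodule.finrank_quotient_add_finrank U
    rw [hUrank, hfinV] at h
    omega
  have hpi : Module.finrank F (Fin m → F) = m := by simp
  let e : ((Fin n → F) ⧸ U) ≃ₗ[F] (Fin m → F) :=
    LinearEquiv.ofFinrankEq _ _ (by rw [hquot, hpi])
  set ℓ : (Fin n → F) →ₗ[F] (Fin m → F) := e.toLinearMap.comp U.mkQ with hℓ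
  have hker : ∀ x, ℓ x = 0 ↔ x ∈ U := by
    intro x
    rw [hℓ]
    simp only [LinearMap.comp_apply]
    constructor
    · intro h
      have h2 : U.mkQ x = 0 := by
        apply e.injective
        simpa using h
      rwa [Submodule.mkQ_apply, Submodule.Quotient.mk_eq_zero] at h2
    · intro h
      have h2 : U.mkQ x = 0 := by
        rwa [Submodule.mkQ_apply, Submodule.Quotient.mk_eq_zero]
      simp [h2]
  obtain ⟨L, hLeval, hLdeg⟩ := exists_linear_rep ℓ
  obtain ⟨cst, hcst⟩ := aux_congr hm1 ℓ Zf hM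
  have hone : (Zf.filter (fun z => ℓ z = ℓ z₀)) = {z₀} := by
    ext z
    rw [Finset.mem_filter, Finset.mem_singleton]
    constructor
    · rintro ⟨hz, hzz⟩
      apply hUexact z hz
      rw [← hker]
      rw [map_sub, hzz, sub_self]
    · rintro rfl
      exact ⟨(hZfm z).mpr hz₀, rfl⟩
  have hcst1 : cst = 1 := by
    have h := hcst (ℓ z₀)
    rw [hone] at h
    simpa using h.symm
  have hpos : ∀ b, (Zf.filter (fun z => ℓ z = b)).Nonempty := by
    intro b
    rw [← Finset.card_pos]
    by_contra hc
    push_neg at hc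
    have h0 : (Zf.filter (fun z => ℓ z = b)).card = 0 := by omega
    have h := hcst b
    rw [h0, hcst1] at h
    simpa using h
  have hsum : ∑ b : Fin m → F, (Zf.filter (fun z => ℓ z = b)).card = Zf.card :=
    (Finset.card_eq_sum_card_fiberwise (fun z _ => mem_univ (ℓ z))).symm
  have hcardpi : Fintype.card (Fin m → F) = q ^ m := by
    rw [Fintype.card_fun]
    simp [hq]
  have hNone : ∀ b, (Zf.filter (fun z => ℓ z = b)).card = 1 := by
    by_contra hc
    push_neg at hc
    obtain ⟨b₀, hb₀⟩ := hc
    have h2 : 2 ≤ (Zf.filter (fun z => ℓ z = b₀)).card := by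
      have := Finset.card_pos.mpr (hpos b₀); omega
    have hlt : ∑ _b : Fin m → F, 1 < ∑ b : Fin m → F, (Zf.filter (fun z => ℓ z = b)).card :=
      Finset.sum_lt_sum (fun b _ => Finset.card_pos.mpr (hpos b)) ⟨b₀, mem_univ _, by omega⟩
    rw [Finset.sum_const, Finset.card_univ, hcardpi, smul_eq_mul, mul_one, hsum] at hlt
    omega
  have hψex : ∀ b : Fin m → F, ∃ z, Zf.filter (fun z => ℓ z = b) = {z} :=
    fun b => Finset.card_eq_one.mp (hNone b)
  choose ψ hψ using hψex
  have hψmem : ∀ b, ψ b ∈ Zf ∧ ℓ (ψ b) = b := by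
    intro b
    have h : ψ b ∈ Zf.filter (fun z => ℓ z = b) := by
      rw [hψ b]; exact Finset.mem_singleton_self _
    exact Finset.mem_filter.mp h
  have hψuniq : ∀ b z, z ∈ Zf → ℓ z = b → z = ψ b := by
    intro b z hz hzb
    have h : z ∈ Zf.filter (fun z => ℓ z = b) := Finset.mem_filter.mpr ⟨hz, hzb⟩
    rw [hψ b] at h
    exact Finset.mem_singleton.mp h
  have hreindex : ∀ g : (Fin n → F) → F, ∑ z ∈ Zf, g z = ∑ b : Fin m → F, g (ψ b) := by
    intro g
    refine Finset.sum_nbij' (i := fun z => ℓ z) (j := ψ) ?_ ?_ ?_ ?_ ?_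
    · exact fun z _ => mem_univ _
    · exact fun b _ => (hψmem b).1
    · exact fun z hz => ((hψuniq (ℓ z) z hz rfl)).symm
    · exact fun b _ => (hψmem b).2
    · exact fun z hz => by rw [← hψuniq (ℓ z) z hz rfl]
  -- coordinate moments
  have hMb : ∀ (i : Fin n) (γ : Fin m → ℕ), (1 + ∑ j, γ j) < (q-1) * m →
      ∑ b : Fin m → F, (ψ b i) * ∏ j, (b j) ^ (γ j) = 0 := by
    intro i γ hγ
    have hQdeg : (X i * ∏ j, (L j) ^ (γ j)).totalDegree < (q-1)*m := by
      have h1 : (X i * ∏ j, (L j) ^ (γ j)).totalDegree ≤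
          (X i : MvPolynomial (Fin n) F).totalDegree + (∏ j, (L j) ^ (γ j)).totalDegree :=
        totalDegree_mul _ _
      have h2 : (X i : MvPolynomial (Fin n) F).totalDegree = 1 := totalDegree_X _
      have h3 : (∏ j, (L j) ^ (γ j)).totalDegree ≤ ∑ j, γ j := by
        refine le_trans (totalDegree_finset_prod _ _) ?_
        refine Finset.sum_le_sum (fun j _ => ?_)
        refine le_trans (totalDegree_pow _ _) ?_
        calc γ j * (L j).totalDegree ≤ γ j * 1 := Nat.mul_le_mul_left _ (hLdeg j)
          _ = γ j := mul_one _
      omega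
    have h0 := hM _ hQdeg
    rw [hreindex] at h0
    rw [← h0]
    refine Finset.sum_congr rfl (fun b _ => ?_)
    rw [map_mul, eval_X, map_prod]
    congr 1
    refine Finset.prod_congr rfl (fun j _ => ?_)
    rw [map_pow, hLeval, (hψmem b).2]
  -- each coordinate of ψ is affine
  have hΦ : ∀ i : Fin n, ∃ Φ : MvPolynomial (Fin m) F,
      (∀ b, eval b Φ = ψ b i) ∧ Φ.totalDegree ≤ 1 := by
    intro i
    obtain ⟨Φ, hΦeval, hΦsupp⟩ := exists_reduced_rep (fun b => ψ b i)
    refine ⟨Φ, hΦeval, ?_⟩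
    by_contra hdeg
    push_neg at hdeg
    have hsupp_ne : Φ.support.Nonempty := by
      rw [Finset.nonempty_iff_ne_empty]
      intro hemp
      rw [support_eq_empty.mp hemp, totalDegree_zero] at hdeg
      omega
    obtain ⟨αs, hαmem, hαsum⟩ :=
      Finset.exists_mem_eq_sup Φ.support hsupp_ne (fun α => α.sum fun _ e => e)
    have htd : Φ.totalDegree = αs.sum fun _ e => e := hαsum
    have hαs : (∑ j, αs j) = Φ.totalDegree := by
      rw [htd, Finsupp.sum_fintype αs (fun _ e => e) (fun _ => rfl)]
    set γ : Fin m → ℕ := fun j => q - 1 - αs j with hγdef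
    have hγα : ∀ j, αs j + γ j = q - 1 := by
      intro j
      have := hΦsupp αs hαmem j
      simp only [hγdef]
      omega
    have hγsum : (∑ j, γ j) + Φ.totalDegree = m * (q-1) := by
      rw [← hαs, ← Finset.sum_add_distrib]
      rw [Finset.sum_congr rfl (fun j _ => by rw [Nat.add_comm, hγα j])]
      rw [Finset.sum_const, Finset.card_univ, Fintype.card_fin, smul_eq_mul]
    have hQγ : 1 + ∑ j, γ j < (q-1)*m := by
      have := Nat.mul_comm m (q-1)
      omega
    have h0 := hMb i γ hQγ
    have hexp : ∑ b : Fin m → F, (ψ b i) * ∏ j, (b j) ^ (γ j)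
        = ∑ α ∈ Φ.support, coeff α Φ * ∏ j, (∑ c : F, c ^ (α j + γ j)) := by
      calc ∑ b : Fin m → F, (ψ b i) * ∏ j, (b j)^(γ j)
          = ∑ b : Fin m → F, ∑ α ∈ Φ.support,
            coeff α Φ * ∏ j, (b j) ^ (α j + γ j) := by
            refine Finset.sum_congr rfl (fun b _ => ?_)
            rw [← hΦeval b, eval_eq', Finset.sum_mul]
            refine Finset.sum_congr rfl (fun α _ => ?_)
            rw [mul_assoc, ← Finset.prod_mul_distrib]
            congr 1
            exact Finset.prod_congr rfl (fun j _ => (pow_add _ _ _).symm)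
        _ = ∑ α ∈ Φ.support, ∑ b : Fin m → F,
            coeff α Φ * ∏ j, (b j) ^ (α j + γ j) := Finset.sum_comm
        _ = ∑ α ∈ Φ.support, coeff α Φ * ∑ b : Fin m → F, ∏ j, (b j) ^ (α j + γ j) := by
            refine Finset.sum_congr rfl (fun α _ => ?_)
            rw [Finset.mul_sum]
        _ = ∑ α ∈ Φ.support, coeff α Φ * ∏ j, (∑ c : F, c ^ (α j + γ j)) := by
            refine Finset.sum_congr rfl (fun α _ => ?_)
            congr 1
            rw [Fintype.prod_sum (fun j c => c ^ (α j + γ j))]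
    rw [hexp] at h0
    have hterm : ∀ α ∈ Φ.support, α ≠ αs →
        coeff α Φ * ∏ j, (∑ c : F, c ^ (α j + γ j)) = 0 := by
      intro α hα hαne
      by_contra hcz
      have hfac : ∀ j, (∑ c : F, c ^ (α j + γ j)) ≠ 0 := by
        intro j hj0
        exact hcz (by rw [Finset.prod_eq_zero (mem_univ j) hj0, mul_zero])
      have hkey : ∀ j, α j + γ j ≠ 0 ∧ (q-1) ∣ (α j + γ j) := by
        intro j
        constructor
        · intro h0'
          apply hfac j
          rw [h0']
          simp only [pow_zero]
          rw [Finset.sum_const, Finset.card_univ, nsmul_eq_mul, mul_one]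
          exact FiniteField.cast_card_eq_zero F
        · by_contra hnd
          rcases eq_or_ne (α j + γ j) 0 with h0' | h0'
          · apply hfac j
            rw [h0']
            simp only [pow_zero]
            rw [Finset.sum_const, Finset.card_univ, nsmul_eq_mul, mul_one]
            exact FiniteField.cast_card_eq_zero F
          · apply hfac j
            rw [aux_sum_pow _ h0', if_neg hnd]
      have hge : ∀ j, αs j ≤ α j := by
        intro j
        obtain ⟨hnz, hdvd⟩ := hkey j
        have h1 : q - 1 ≤ α j + γ j := Nat.le_of_dvd (Nat.pos_of_ne_zero hnz) hdvd
        have h2 := hγα j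
        omega
      obtain ⟨j₀, hj₀⟩ : ∃ j₀, αs j₀ ≠ α j₀ := by
        by_contra h'
        push_neg at h'
        exact hαne (Finsupp.ext (fun j => (h' j).symm))
      have hstrict : αs j₀ + (q-1) ≤ α j₀ := by
        obtain ⟨hnz, hdvd⟩ := hkey j₀
        have h1 : αs j₀ < α j₀ := lt_of_le_of_ne (hge j₀) hj₀
        have h2 : q - 1 < α j₀ + γ j₀ := by
          have := hγα j₀; omega
        obtain ⟨t, ht⟩ := hdvd
        have ht2 : 2 ≤ t := by
          rcases t with _ | t
          · omega
          · rcases t with _ | t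
            · omega
            · omega
        have h3 : 2 * (q-1) ≤ α j₀ + γ j₀ := by
          rw [ht]
          have h4 : (q-1) * 2 ≤ (q-1) * t := Nat.mul_le_mul_left _ ht2
          omega
        have := hγα j₀
        omega
      have hsum_big : Φ.totalDegree + (q-1) ≤ ∑ j, α j := by
        have h1 : ∀ j, αs j + (if j = j₀ then q-1 else 0) ≤ α j := by
          intro j
          rcases eq_or_ne j j₀ with rfl | hj
          · rw [if_pos rfl]; exact hstrict
          · rw [if_neg hj, Nat.add_zero]; exact hge j
        calc Φ.totalDegree + (q-1) = (∑ j, αs j) + (q-1) := by rw [hαs]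
          _ = ∑ j, (αs j + if j = j₀ then q-1 else 0) := by
              rw [Finset.sum_add_distrib, Finset.sum_ite_eq' univ j₀ (fun _ => q-1),
                if_pos (mem_univ _)]
          _ ≤ ∑ j, α j := Finset.sum_le_sum (fun j _ => h1 j)
      have hsle : (∑ j, α j) ≤ Φ.totalDegree := by
        have h := le_totalDegree hα
        rwa [Finsupp.sum_fintype α (fun _ e => e) (fun _ => rfl)] at h
      omega
    rw [Finset.sum_eq_single αs hterm (fun h => absurd hαmem h)] at h0
    have hprodval : (∏ j : Fin m, (∑ c : F, c ^ (αs j + γ j))) = (-1 : F) ^ m := by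
      rw [Finset.prod_congr rfl (fun j _ => ?_)]
      · rw [Finset.prod_const, Finset.card_univ, Fintype.card_fin]
      · rw [hγα j, aux_sum_pow _ (by omega : q - 1 ≠ 0), if_pos dvd_rfl]
    rw [hprodval] at h0
    rcases mul_eq_zero.mp h0 with h | h
    · exact (mem_support_iff.mp hαmem) h
    · exact (pow_ne_zero m (neg_ne_zero.mpr one_ne_zero)) h
  choose Φ hΦeval hΦdeg using hΦ
  have haff : ∀ (a b e : Fin m → F) (c : F), ψ (c • (a - b) + e) = c • (ψ a - ψ b) + ψ e := by
    intro a b e c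
    funext i
    have h := eval_affine (Φ i) (hΦdeg i) a b e c
    rw [hΦeval, hΦeval, hΦeval, hΦeval] at h
    simpa using h
  have hclosed : ∀ (c : F) (p₁ p₂ p₃ : Fin n → F), p₁ ∈ Z → p₂ ∈ Z → p₃ ∈ Z →
      c • (p₁ - p₂) + p₃ ∈ Z := by
    intro c p₁ p₂ p₃ h1 h2 h3
    have e1 : p₁ = ψ (ℓ p₁) := hψuniq _ _ ((hZfm _).mpr h1) rfl
    have e2 : p₂ = ψ (ℓ p₂) := hψuniq _ _ ((hZfm _).mpr h2) rfl
    have e3 : p₃ = ψ (ℓ p₃) := hψuniq _ _ ((hZfm _).mpr h3) rfl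
    rw [e1, e2, e3, ← haff]
    exact (hZfm _).mp (hψmem _).1
  refine hnl ⟨Z, ?_⟩ rfl
  intro c p₁ p₂ p₃ h1 h2 h3
  simpa [vsub_eq_sub, vadd_eq_add] using hclosed c p₁ p₂ p₃ h1 h2 h3
end
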